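/- Let (a_n) be a sequence of positive real numbers and let ρ = limsup a_n^{1/n}. Then there exists a sequence (b_n) of positive real numbers with lim b_{n+1}/b_n = 1 such that the series ∑ a_n b_n t^{-n} converges for all t > ρ, but ∑ a_n b_n ρ^{-n} diverges. -/

import Mathlib

open Filter Topology

lemma aux_maj (d : ℕ → ℝ) (hd : ∀ n, 0 ≤ d n)
    (hfreq : ∀ ε : ℝ, 0 < ε → ∀ M : ℕ, ∃ n, M ≤ n ∧ d n ≤ ε * n) :
    ∃ h : ℕ → ℝ, (∀ n, 0 ≤ h n) ∧
      Filter.Tendsto (fun n => h (n + 1) - h n) Filter.atTop (nhds 0) ∧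
      Filter.Tendsto (fun n => h n / n) Filter.atTop (nhds 0) ∧
      ∀ M : ℕ, ∃ n, M ≤ n ∧ d n ≤ h n := by
  -- choose the sparse subsequence
  have key : ∀ k M : ℕ, ∃ n, M ≤ n ∧ d n ≤ (1 / (k + 1 : ℝ)) * n := by
    intro k M
    exact hfreq _ (by positivity) M
  choose F hF1 hF2 using key
  set N : ℕ → ℕ := fun k => Nat.rec 0 (fun k Nk => F k (2 * Nk + 1)) k with hN
  have hNsucc : ∀ k, N (k + 1) = F k (2 * N k + 1) := fun k => rfl
  have hNge : ∀ k, 2 * N k + 1 ≤ N (k + 1) := fun k => hF1 k _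
  have hNd : ∀ k, d (N (k + 1)) ≤ (1 / (k + 1 : ℝ)) * N (k + 1) := fun k => hF2 k _
  have hNmono : StrictMono N := strictMono_nat_of_lt_succ (fun k => by
    have := hNge k; omega)
  have hNself : ∀ k, k ≤ N k := fun k => hNmono.le_apply
  have hN0 : N 0 = 0 := rfl
  have hN1pos : ∀ k, 0 < N (k + 1) := fun k => by have := hNge k; omega
  -- values at the nodes
  set v : ℕ → ℝ := fun k => Nat.rec 0 (fun k vk => max vk (d (N (k + 1)))) k with hv
  have hvsucc : ∀ k, v (k + 1) = max (v k) (d (N (k + 1))) := fun k => rfl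
  have hv0 : v 0 = 0 := rfl
  have hvmono : ∀ k, v k ≤ v (k + 1) := fun k => by rw [hvsucc]; exact le_max_left _ _
  have hvnn : ∀ k, 0 ≤ v k := by
    intro k
    induction k with
    | zero => simp [hv0]
    | succ k ih => exact ih.trans (hvmono k)
  have hvd : ∀ k, d (N (k + 1)) ≤ v (k + 1) := fun k => by rw [hvsucc]; exact le_max_right _ _
  -- slopes
  set s : ℕ → ℝ := fun k => (v (k + 1) - v k) / ((N (k + 1) : ℝ) - (N k : ℝ)) with hs
  have hNgap : ∀ k, (0 : ℝ) < (N (k + 1) : ℝ) - (N k : ℝ) := by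
    intro k
    have := hNge k
    have : (N k : ℝ) < (N (k + 1) : ℝ) := by exact_mod_cast hNmono (Nat.lt_succ_self k)
    linarith
  have hsnn : ∀ k, 0 ≤ s k := fun k =>
    div_nonneg (by linarith [hvmono k]) (hNgap k).le
  have hsbound : ∀ k, s k ≤ 2 / (k + 1 : ℝ) := by
    intro k
    have hgap : (N (k + 1) : ℝ) / 2 ≤ (N (k + 1) : ℝ) - (N k : ℝ) := by
      have := hNge k
      have h2 : (2 * N k + 1 : ℝ) ≤ (N (k + 1) : ℝ) := by exact_mod_cast this
      push_cast at h2 ⊢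
      linarith
    have hnum : v (k + 1) - v k ≤ d (N (k + 1)) := by
      rw [hvsucc]
      rcases max_cases (v k) (d (N (k + 1))) with ⟨h1, h2⟩ | ⟨h1, h2⟩
      · rw [h1]; simpa using hd _
      · rw [h1]; linarith [hvnn k]
    have hdb := hNd k
    have hpos : (0 : ℝ) < N (k + 1) := by exact_mod_cast hN1pos k
    rw [hs]
    have : (v (k + 1) - v k) / ((N (k + 1) : ℝ) - (N k : ℝ)) ≤
        ((1 / (k + 1 : ℝ)) * N (k + 1)) / ((N (k + 1) : ℝ) / 2) := by
      apply div_le_div₀ (by positivity) (hnum.trans hdb) (by positivity) hgap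
    refine this.trans (le_of_eq ?_)
    field_simp
  -- the block index
  set K : ℕ → ℕ := fun n => Nat.findGreatest (fun k => N k ≤ n) n with hK
  have hKle : ∀ n, N (K n) ≤ n := fun n =>
    Nat.findGreatest_spec (P := fun k => N k ≤ n) (Nat.zero_le n)
      (by show N 0 ≤ n; omega)
  have hKlt : ∀ n, n < N (K n + 1) := by
    intro n
    by_contra hcon
    push_neg at hcon
    exact Nat.findGreatest_is_greatest (Nat.lt_succ_self (K n))
      ((hNself (K n + 1)).trans hcon) hcon
  have hKge : ∀ k n, N k ≤ n → k ≤ K n := fun k n hkn =>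
    Nat.le_findGreatest ((hNself k).trans hkn) hkn
  
  have hKval : ∀ k n, N k ≤ n → n < N (k + 1) → K n = k := by
    intro k n h1 h2
    have hge := hKge k n h1
    have hlt : K n < k + 1 := by
      by_contra hc
      push_neg at hc
      have h3 := hNmono.monotone hc
      have h4 := hKle n
      omega
    omega
  set σ : ℕ → ℝ := fun n => s (K n) with hσ
  set h : ℕ → ℝ := fun n => ∑ j ∈ Finset.range n, σ j with hh
  have hσnn : ∀ n, 0 ≤ σ n := fun n => hsnn (K n)
  have hhnn : ∀ n, 0 ≤ h n := fun n => Finset.sum_nonneg (fun j _ => hσnn j)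
  have hinc : ∀ n, h (n + 1) = h n + σ n := fun n => Finset.sum_range_succ σ n
  have hstep : ∀ k n, N k ≤ n → n < N (k + 1) → h (n + 1) = h n + s k := by
    intro k n h1 h2
    rw [hinc, hσ]
    simp only []
    rw [hKval k n h1 h2]
  have hblock : ∀ k m, h (N k) = v k → N k ≤ m → m ≤ N (k + 1) →
      h m = v k + s k * ((m : ℝ) - (N k : ℝ)) := by
    intro k m hnode h1 h2
    induction m, h1 using Nat.le_induction with
    | base => rw [hnode]; simp
    | succ m h1 ih =>
      have h2' : m ≤ N (k + 1) := by omega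
      have hm : m < N (k + 1) := by omega
      rw [hstep k m h1 hm, ih h2']
      push_cast
      ring
  have hNode : ∀ k, h (N k) = v k := by
    intro k
    induction k with
    | zero => rw [hN0, hv0]; simp [hh]
    | succ k ih =>
      have := hblock k (N (k + 1)) ih (hNmono (Nat.lt_succ_self k)).le (le_refl _)
      rw [this, hs]
      simp only []
      rw [div_mul_cancel₀ _ (hNgap k).ne']
      ring
  have hfull : ∀ n, h n = v (K n) + s (K n) * ((n : ℝ) - (N (K n) : ℝ)) := fun n =>
    hblock (K n) n (hNode _) (hKle n) (hKlt n).le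
  -- K tends to infinity
  have hKtop : Filter.Tendsto K Filter.atTop Filter.atTop := by
    apply tendsto_atTop_atTop.mpr
    intro k
    exact ⟨N k, fun n hn => hKge k n hn⟩
  refine ⟨h, hhnn, ?_, ?_, ?_⟩
  · -- increments tend to 0
    have : ∀ n, h (n + 1) - h n = σ n := fun n => by rw [hinc]; ring
    simp only [this]
    apply squeeze_zero hσnn (fun n => hsbound (K n))
    have base : Filter.Tendsto (fun k : ℕ => 2 / ((k : ℝ) + 1)) Filter.atTop (nhds 0) := by
      have := tendsto_one_div_add_atTop_nhds_zero_nat.const_mul (2 : ℝ)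
      simpa [div_eq_mul_inv, mul_assoc] using this
    exact base.comp hKtop
  · -- h n / n → 0
    have base : Filter.Tendsto (fun k : ℕ => 3 / (k : ℝ)) Filter.atTop (nhds 0) :=
      tendsto_const_div_atTop_nhds_zero_nat 3
    have upper : Filter.Tendsto (fun n : ℕ => 3 / (K n : ℝ)) Filter.atTop (nhds 0) :=
      base.comp hKtop
    -- v k * k ≤ N k for k ≥ 1
    have hvb : ∀ k, 1 ≤ k → v k * k ≤ (N k : ℝ) := by
      intro k hk
      induction k with
      | zero => omega
      | succ k ih =>
        rcases Nat.eq_zero_or_pos k with hk0 | hkpos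
        · subst hk0
          rw [hvsucc, hv0]
          have h0 := hNd 0
          norm_num at h0 ⊢
          exact h0
        · have ih' := ih hkpos
          have hvk : v k ≤ (N k : ℝ) := by
            have hkR : (1 : ℝ) ≤ (k : ℝ) := by exact_mod_cast hkpos
            nlinarith [hvnn k]
          have h2N : (2 * N k : ℝ) ≤ (N (k + 1) : ℝ) := by
            have := hNge k
            exact_mod_cast Nat.le_of_succ_le this
          rw [hvsucc]
          rcases max_cases (v k) (d (N (k + 1))) with ⟨h1, _⟩ | ⟨h1, _⟩
          · rw [h1]
            push_cast
            have hkR : (1 : ℝ) ≤ (k : ℝ) := by exact_mod_cast hkpos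
            push_cast at ih' h2N
            nlinarith
          · rw [h1]
            have hdk := hNd k
            have hpos : (0 : ℝ) < (k : ℝ) + 1 := by positivity
            rw [one_div, inv_mul_eq_div, le_div_iff₀ hpos] at hdk
            push_cast
            linarith
    apply tendsto_of_tendsto_of_tendsto_of_le_of_le' tendsto_const_nhds upper
    · filter_upwards with n
      exact div_nonneg (hhnn n) (Nat.cast_nonneg n)
    · filter_upwards [Filter.eventually_ge_atTop (N 1)] with n hn
      have hK1 : 1 ≤ K n := hKge 1 n hn
      set k := K n with hkdef
      have hk1 : 1 ≤ k := hK1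
      rcases Nat.eq_zero_or_pos n with hn0 | hnpos
      · exfalso
        have h0 : (0 : ℕ) < N 1 := hN1pos 0
        omega
      have hnR : (0 : ℝ) < (n : ℝ) := by exact_mod_cast hnpos
      have hkR : (0 : ℝ) < (k : ℝ) := by exact_mod_cast hk1
      rw [div_le_div_iff₀ hnR hkR]
      have hb1 : h n ≤ v k + s k * n := by
        have := hfull n
        rw [← hkdef] at this
        nlinarith [hsnn k, Nat.cast_nonneg (N k) (α := ℝ)]
      have hb2 : v k * k ≤ (n : ℝ) := by
        have := hvb k hk1
        have hNn : (N k : ℝ) ≤ (n : ℝ) := by exact_mod_cast hKle n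
        linarith
      have hb3 : s k * k ≤ 2 := by
        have h1 := hsbound k
        have h2 : (0 : ℝ) < (k : ℝ) + 1 := by positivity
        have h3 : s k * k ≤ (2 / ((k : ℝ) + 1)) * k :=
          mul_le_mul_of_nonneg_right h1 hkR.le
        refine h3.trans ?_
        rw [div_mul_eq_mul_div, div_le_iff₀ h2]
        linarith
      nlinarith [mul_le_mul_of_nonneg_right hb1 hkR.le,
        mul_le_mul_of_nonneg_right hb3 hnR.le]
  · -- frequently d n ≤ h n
    intro M
    refine ⟨N (M + 1), ?_, ?_⟩
    · have := hNself (M + 1); omega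
    · rw [hNode (M + 1)]
      exact hvd M

theorem stmt0 (a : ℕ → ℝ) (ha : ∀ n, 0 < a n) (ρ : ℝ) (hρ : 0 < ρ)
    (hlimsup : Filter.limsup (fun n : ℕ => (a n) ^ ((n : ℝ)⁻¹)) Filter.atTop = ρ) :
    ∃ b : ℕ → ℝ, (∀ n, 0 < b n) ∧
      Filter.Tendsto (fun n => b (n + 1) / b n) Filter.atTop (nhds 1) ∧
      (∀ t : ℝ, ρ < t → Summable (fun n => a n * b n * t ^ (-(n : ℤ)))) ∧
      ¬ Summable (fun n => a n * b n * ρ ^ (-(n : ℤ))) := by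
  set u : ℕ → ℝ := fun n => (a n) ^ ((n : ℝ)⁻¹) with hu
  have hupos : ∀ n, 0 < u n := fun n => Real.rpow_pos_of_pos (ha n) _
  have hbdd : Filter.IsBoundedUnder (· ≤ ·) Filter.atTop u := by
    by_contra hcon
    have hempty : {b : ℝ | ∀ᶠ n in Filter.atTop, u n ≤ b} = ∅ := by
      ext x
      simp only [Set.mem_setOf_eq, Set.mem_empty_iff_false, iff_false]
      intro hb
      exact hcon ⟨x, hb⟩
    rw [Filter.limsup_eq, hempty, Real.sInf_empty] at hlimsup
    linarith
  have hcobdd : Filter.IsCoboundedUnder (· ≤ ·) Filter.atTop u :=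
    Filter.isCoboundedUnder_le_of_le Filter.atTop (x := 0) (fun n => (hupos n).le)
  have hapow : ∀ n : ℕ, 1 ≤ n → (u n) ^ n = a n := fun n hn =>
    Real.rpow_inv_natCast_pow (ha n).le (by omega)
  set d : ℕ → ℝ := fun n => max 0 (-(Real.log (a n / ρ ^ n))) with hd
  have hdnn : ∀ n, 0 ≤ d n := fun n => le_max_left _ _
  have hcpos : ∀ n : ℕ, 0 < a n / ρ ^ n := fun n => div_pos (ha n) (pow_pos hρ n)
  have hfreq : ∀ ε : ℝ, 0 < ε → ∀ M : ℕ, ∃ n, M ≤ n ∧ d n ≤ ε * n := by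
    intro ε hε M
    have hlt : ρ * Real.exp (-ε) < Filter.limsup u Filter.atTop := by
      rw [hlimsup]
      have h1 : Real.exp (-ε) < 1 := Real.exp_lt_one_iff.mpr (by linarith)
      nlinarith [Real.exp_pos (-ε)]
    have hfr := Filter.frequently_lt_of_lt_limsup hcobdd hlt
    rw [Filter.frequently_atTop] at hfr
    obtain ⟨n, hn, hun⟩ := hfr (max M 1)
    have hn1 : 1 ≤ n := le_trans (le_max_right _ _) hn
    refine ⟨n, le_trans (le_max_left _ _) hn, ?_⟩
    have hbasepos : (0 : ℝ) ≤ ρ * Real.exp (-ε) := by positivity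
    have hpow : (ρ * Real.exp (-ε)) ^ n < a n := by
      rw [← hapow n hn1]
      exact pow_lt_pow_left₀ hun hbasepos (by omega)
    rw [mul_pow, ← Real.exp_nat_mul] at hpow
    have hlog : (n : ℝ) * (-ε) < Real.log (a n / ρ ^ n) := by
      rw [Real.lt_log_iff_exp_lt (hcpos n), lt_div_iff₀ (by positivity)]
      linarith [hpow]
    refine max_le (by positivity) (by linarith)
  obtain ⟨h, hhnn, hten1, hten2, hmaj⟩ := aux_maj d hdnn hfreq
  set b : ℕ → ℝ := fun n => Real.exp (h n) with hb
  have hbpos : ∀ n, 0 < b n := fun n => Real.exp_pos _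
  refine ⟨b, hbpos, ?_, ?_, ?_⟩
  · have heq : (fun n => b (n + 1) / b n) = fun n => Real.exp (h (n + 1) - h n) := by
      funext n
      rw [Real.exp_sub]
    rw [heq]
    have := (Real.continuous_exp.tendsto 0).comp hten1
    simpa [Function.comp_def] using this
  · intro t ht
    have htpos : 0 < t := hρ.trans ht
    set r : ℝ := (ρ + t) / 2 with hr
    have hr1 : ρ < r := by rw [hr]; linarith
    have hr2 : r < t := by rw [hr]; linarith
    have hrpos : 0 < r := hρ.trans hr1
    have hev1 : ∀ᶠ n in Filter.atTop, u n < r :=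
      Filter.eventually_lt_of_limsup_lt (by rw [hlimsup]; exact hr1) hbdd
    have htr : 1 < t / r := by rw [lt_div_iff₀ hrpos]; linarith
    set ε : ℝ := Real.log (t / r) / 2 with hε
    have hεpos : 0 < ε := by
      have := Real.log_pos htr
      rw [hε]; linarith
    have hev2 : ∀ᶠ n in Filter.atTop, h n / n < ε := hten2.eventually_lt_const hεpos
    set q : ℝ := r * Real.exp ε / t with hq
    have hq0 : 0 ≤ q := by positivity
    have hq1 : q < 1 := by
      rw [hq, div_lt_one htpos]
      have : Real.exp ε < t / r := by
        rw [← Real.lt_log_iff_exp_lt (by positivity), hε]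
        linarith [Real.log_pos htr]
      calc r * Real.exp ε < r * (t / r) := by
            exact mul_lt_mul_of_pos_left this hrpos
        _ = t := by field_simp
    have hbound : ∀ᶠ n in Filter.atTop, a n * b n * t ^ (-(n : ℤ)) ≤ q ^ n := by
      filter_upwards [hev1, hev2, Filter.eventually_ge_atTop 1] with n h1 h2 hn1
      have hnR : (0 : ℝ) < (n : ℝ) := by exact_mod_cast hn1
      have han : a n ≤ r ^ n := by
        rw [← hapow n hn1]
        exact le_of_lt (pow_lt_pow_left₀ h1 (hupos n).le (by omega))
      have hbn : b n ≤ Real.exp ε ^ n := by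
        rw [hb]
        simp only []
        rw [← Real.exp_nat_mul, Real.exp_le_exp]
        have : h n < ε * n := by
          rw [← div_lt_iff₀ hnR] at *
          linarith [h2]
        linarith
      have htz : t ^ (-(n : ℤ)) = (t ^ n)⁻¹ := by
        rw [zpow_neg, zpow_natCast]
      rw [htz, hq, div_pow, mul_pow]
      rw [mul_inv_le_iff₀ (by positivity)]
      calc a n * b n ≤ r ^ n * Real.exp ε ^ n := by
            apply mul_le_mul han hbn (hbpos n).le (by positivity)
        _ = r ^ n * Real.exp ε ^ n / t ^ n * t ^ n := by
            field_simp
    rw [Filter.eventually_atTop] at hbound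
    obtain ⟨M, hM⟩ := hbound
    rw [← summable_nat_add_iff M]
    apply Summable.of_nonneg_of_le
    · intro n
      have hz : (0:ℝ) < t ^ (-((n + M : ℕ) : ℤ)) := zpow_pos htpos _
      exact le_of_lt (mul_pos (mul_pos (ha _) (hbpos _)) hz)
    · intro n
      exact hM (n + M) (by omega)
    · exact (summable_nat_add_iff M).mpr (summable_geometric_of_lt_one hq0 hq1)
  · intro hsum
    have h0 := hsum.tendsto_atTop_zero
    have hev : ∀ᶠ n in Filter.atTop, a n * b n * ρ ^ (-(n : ℤ)) < 1 :=
      h0.eventually_lt_const one_pos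
    have hfr : ∃ᶠ n in Filter.atTop, (1 : ℝ) ≤ a n * b n * ρ ^ (-(n : ℤ)) := by
      rw [Filter.frequently_atTop]
      intro M
      obtain ⟨n, hn, hdn⟩ := hmaj M
      refine ⟨n, hn, ?_⟩
      have hzp : ρ ^ (-(n : ℤ)) = (ρ ^ n)⁻¹ := by rw [zpow_neg, zpow_natCast]
      have hexp : (a n / ρ ^ n)⁻¹ ≤ Real.exp (h n) := by
        calc (a n / ρ ^ n)⁻¹ = Real.exp (-(Real.log (a n / ρ ^ n))) := by
              rw [Real.exp_neg, Real.exp_log (hcpos n)]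
          _ ≤ Real.exp (d n) := Real.exp_le_exp.mpr (le_max_right _ _)
          _ ≤ Real.exp (h n) := Real.exp_le_exp.mpr hdn
      have : (a n / ρ ^ n) * (a n / ρ ^ n)⁻¹ ≤ (a n / ρ ^ n) * Real.exp (h n) :=
        mul_le_mul_of_nonneg_left hexp (hcpos n).le
      rw [mul_inv_cancel₀ (hcpos n).ne'] at this
      calc (1 : ℝ) ≤ (a n / ρ ^ n) * Real.exp (h n) := this
        _ = a n * b n * ρ ^ (-(n : ℤ)) := by
            rw [hzp, hb]
            ring
    obtain ⟨n, hge, hlt⟩ := (hfr.and_eventually hev).exists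
    linarith
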